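/- arXiv:1808.07438 — 4 statements merged into one kernel-verified Lean document; each statement's English description precedes it below -/
import Mathlib

section
/- The set S = { t • (1, 7, 7², 7³, 7⁴) : t ∈ ℤ/382ℤ } ⊆ (ℤ/382ℤ)⁵ is an independent set in the fifth strong product power of the circular graph C_{108,382}. Equivalently, for every nonzero t ∈ ℤ/382ℤ there exists an index i ∈ {0,1,2,3,4} such that the representative of t·7^i in {0,…,381} lies in the interval [108, 274]. -/
/-- Circular distance between two elements of `ZMod n`. -/
def cyclicDist (n : ℕ) (a b : ZMod n) : ℕ := min (a - b).val (b - a).val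

/-- The circular graph `C_{k,n}` on `ZMod n`: distinct vertices are adjacent
iff their circular distance is strictly less than `k`. -/
def circularGraph (k n : ℕ) : SimpleGraph (ZMod n) where
  Adj u v := u ≠ v ∧ cyclicDist n u v < k
  symm := by
    constructor
    rintro u v ⟨h1, h2⟩
    exact ⟨h1.symm, by simpa [cyclicDist, min_comm] using h2⟩
  loopless := by constructor; rintro u ⟨h, _⟩; exact h rfl

/-- The `d`-th strong product power of a graph. -/
def strongPower {V : Type*} (G : SimpleGraph V) (d : ℕ) : SimpleGraph (Fin d → V) where
  Adj x y := x ≠ y ∧ ∀ i, x i = y i ∨ G.Adj (x i) (y i)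
  symm := by
    constructor
    rintro x y ⟨h1, h2⟩
    exact ⟨h1.symm, fun i => (h2 i).imp Eq.symm (fun h => G.adj_symm h)⟩
  loopless := by constructor; rintro x ⟨h, _⟩; exact h rfl

/-- A set of vertices is independent if no two of its elements are adjacent. -/
def IsIndep {V : Type*} (G : SimpleGraph V) (s : Set V) : Prop :=
  ∀ u ∈ s, ∀ v ∈ s, u ≠ v → ¬ G.Adj u v

/-- The independence number of a graph on a finite vertex set. -/
noncomputable def alpha {V : Type*} [Fintype V] (G : SimpleGraph V) : ℕ :=
  sSup {m | ∃ s : Finset V, IsIndep G ↑s ∧ s.card = m}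

/-- The Shannon capacity of a graph. -/
noncomputable def shannonCapacity {V : Type*} [Fintype V] (G : SimpleGraph V) : ℝ :=
  ⨆ d : ℕ+, (alpha (strongPower G d) : ℝ) ^ ((1 : ℝ) / (d : ℝ))

set_option maxRecDepth 10000 in
lemma aux382 : ∀ u : ZMod 382, u ≠ 0 →
    ∃ i : Fin 5, 108 ≤ min (u * 7 ^ (i:ℕ)).val (-(u * 7 ^ (i:ℕ))).val := by decide

theorem stmt0 :
    IsIndep (strongPower (circularGraph 108 382) 5)
      {x : Fin 5 → ZMod 382 | ∃ t : ZMod 382, x = fun i : Fin 5 => t * 7 ^ (i : ℕ)} := by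
  rintro x ⟨t, rfl⟩ y ⟨s, rfl⟩ hne ⟨_, hadj⟩
  have hw : t - s ≠ 0 := by
    intro h
    apply hne
    have : t = s := sub_eq_zero.mp h
    simp [this]
  obtain ⟨i, hi⟩ := aux382 (t - s) hw
  rcases hadj i with h | h
  · have : (t - s) * 7 ^ (i:ℕ) = 0 := by
      have := sub_eq_zero.mpr h
      linear_combination this
    rw [this] at hi
    simp [ZMod.val_zero] at hi
  · have hd : cyclicDist 382 (t * 7 ^ (i:ℕ)) (s * 7 ^ (i:ℕ))
        = min ((t - s) * 7 ^ (i:ℕ)).val (-((t - s) * 7 ^ (i:ℕ))).val := by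
      unfold cyclicDist
      ring_nf
    have := h.2
    rw [hd] at this
    omega
end

section
/- For every nonzero t ∈ ℤ/382ℤ there exists i ∈ {0,1,2,3,4} such that the canonical representative of t·7^i in {0,1,…,381} lies in [108, 274]. -/
set_option maxRecDepth 20000 in
theorem stmt1 (t : ZMod 382) (ht : t ≠ 0) :
    ∃ i : Fin 5, (t * 7 ^ (i : ℕ)).val ∈ Set.Icc 108 274 := by
  revert ht
  simp only [Set.mem_Icc]
  revert t
  decide
end

section
/- For integers k, k', n, n' with n ≥ 2k, n' ≥ 2k', and n'·k ≤ n·k', and for every positive integer d, the independence number of the d-th strong product power satisfies α(C_{k',n'}^d) ≤ α(C_{k,n}^d). -/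
section aux

/-- Numeric core: scaling by `n/n'` via `a ↦ a*n/n'` preserves the distance bounds. -/
lemma natKey (k k' n n' : ℕ) (hk : 1 ≤ k) (hn'pos : 0 < n') (hnpos : 0 < n)
    (hratio : n' * k ≤ n * k') (a b : ℕ) (hb : b ≤ a) (ha : a < n')
    (h1 : k' ≤ a - b) (h2 : a - b ≤ n' - k') :
    k ≤ a * n / n' - b * n / n' ∧ a * n / n' - b * n / n' + k ≤ n := by
  set s := a - b with hs
  have hsum : a = b + s := by omega
  -- lower bound
  have hkle : k ≤ s * n / n' := by
    rw [Nat.le_div_iff_mul_le hn'pos]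
    calc k * n' = n' * k := by ring
    _ ≤ n * k' := hratio
    _ ≤ n * s := Nat.mul_le_mul_left n h1
    _ = s * n := by ring
  have hlow : b * n / n' + k ≤ a * n / n' := by
    have hadd := Nat.add_div_le_add_div (b * n) (s * n) n'
    have heq : a * n = b * n + s * n := by rw [hsum]; ring
    calc b * n / n' + k ≤ b * n / n' + s * n / n' := by omega
    _ ≤ (b * n + s * n) / n' := hadd
    _ = a * n / n' := by rw [← heq]
  constructor
  · omega
  · -- upper bound : a*n/n' ≤ b*n/n' + (n - k)
    have hup : a * n / n' ≤ b * n / n' + (n - k) := by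
      have hdivlt : a * n / n' < b * n / n' + (n - k) + 1 := by
        rw [Nat.div_lt_iff_lt_mul hn'pos]
        have hb1 : b * n < n' * (b * n / n') + n' := by
          have hdm := Nat.div_add_mod (b * n) n'
          have hm : b * n % n' < n' := Nat.mod_lt _ hn'pos
          omega
        have hsn : s * n ≤ (n' - k') * n := Nat.mul_le_mul_right n h2
        have hnk : (n' - k') * n ≤ n' * (n - k) := by
          have hkn : n' * k ≤ k' * n := by
            calc n' * k ≤ n * k' := hratio
            _ = k' * n := by ring
          have hkn' : k' ≤ n' := by
            nlinarith
          have hkle2 : k ≤ n := by nlinarith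
          calc (n' - k') * n = n' * n - k' * n := by rw [Nat.sub_mul]
          _ ≤ n' * n - n' * k := by omega
          _ = n' * (n - k) := (Nat.mul_sub n' n k).symm
        calc a * n = b * n + s * n := by rw [hsum]; ring
        _ < n' * (b * n / n') + n' + n' * (n - k) := by omega
        _ = (b * n / n' + (n - k) + 1) * n' := by ring
      omega
    have hkn : k ≤ n := by nlinarith
    omega

lemma cyclicDist_comm (n : ℕ) (a b : ZMod n) : cyclicDist n a b = cyclicDist n b a := by
  rw [cyclicDist, cyclicDist, min_comm]

variable {k k' n n' : ℕ} [NeZero n] [NeZero n']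

/-- The scaling map `ZMod n' → ZMod n`. -/
def scaleMap (n n' : ℕ) (x : ZMod n') : ZMod n := ((x.val * n / n' : ℕ) : ZMod n)

lemma scale_val_lt (hnpos : 0 < n) (x : ZMod n') : x.val * n / n' < n := by
  have hn' : 0 < n' := NeZero.pos n'
  rw [Nat.div_lt_iff_lt_mul hn']
  have := ZMod.val_lt x
  calc x.val * n < n' * n := by
        exact Nat.mul_lt_mul_of_lt_of_le this le_rfl hnpos
  _ = n * n' := by ring

lemma scaleMap_key (hk : 1 ≤ k) (hnpos : 0 < n)
    (hratio : n' * k ≤ n * k') (u v : ZMod n') (huv : u ≠ v)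
    (hdist : k' ≤ cyclicDist n' u v) :
    scaleMap n n' u ≠ scaleMap n n' v ∧ k ≤ cyclicDist n (scaleMap n n' u) (scaleMap n n' v) := by
  have hn' : 0 < n' := NeZero.pos n'
  -- WLOG v.val ≤ u.val
  have main : ∀ u v : ZMod n', u ≠ v → k' ≤ cyclicDist n' u v → v.val ≤ u.val →
      scaleMap n n' u ≠ scaleMap n n' v ∧
        k ≤ cyclicDist n (scaleMap n n' u) (scaleMap n n' v) := by
    intro u v huv hdist hle
    have hvalne : u.val ≠ v.val := fun h => huv (ZMod.val_injective n' h)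
    have hsub : (u - v).val = u.val - v.val := ZMod.val_sub hle
    have huvne : u - v ≠ 0 := sub_ne_zero_of_ne huv
    have hsub' : (v - u).val = n' - (u - v).val := by
      have : v - u = -(u - v) := by ring
      rw [this]
      have : NeZero (u - v) := ⟨huvne⟩
      exact ZMod.val_neg_of_ne_zero (u - v)
    have hcd : cyclicDist n' u v = min (u.val - v.val) (n' - (u.val - v.val)) := by
      rw [cyclicDist, hsub, hsub']
      rw [hsub]
    rw [hcd] at hdist
    have h1 : k' ≤ u.val - v.val := le_trans hdist (min_le_left _ _)
    have h2' : k' ≤ n' - (u.val - v.val) := le_trans hdist (min_le_right _ _)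
    have hulst : u.val < n' := ZMod.val_lt u
    have h2 : u.val - v.val ≤ n' - k' := by omega
    obtain ⟨hA, hB⟩ := natKey k k' n n' hk hn' hnpos hratio u.val v.val hle (ZMod.val_lt u) h1 h2
    set ga := u.val * n / n' with hga
    set gb := v.val * n / n' with hgb
    have hgalt : ga < n := scale_val_lt hnpos u
    have hgblt : gb < n := scale_val_lt hnpos v
    have hvala : (scaleMap n n' u).val = ga := ZMod.val_cast_of_lt hgalt
    have hvalb : (scaleMap n n' v).val = gb := ZMod.val_cast_of_lt hgblt
    have hgblea : gb ≤ ga := by omega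
    have hne : scaleMap n n' u ≠ scaleMap n n' v := by
      intro h
      have : ga = gb := by rw [← hvala, ← hvalb, h]
      omega
    refine ⟨hne, ?_⟩
    have hsub2 : (scaleMap n n' u - scaleMap n n' v).val = ga - gb := by
      rw [ZMod.val_sub (by omega), hvala, hvalb]
    have hsub3 : (scaleMap n n' v - scaleMap n n' u).val = n - (ga - gb) := by
      have he : scaleMap n n' v - scaleMap n n' u = -(scaleMap n n' u - scaleMap n n' v) := by
        ring
      rw [he]
      have hne0 : scaleMap n n' u - scaleMap n n' v ≠ 0 := sub_ne_zero_of_ne hne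
      have : NeZero (scaleMap n n' u - scaleMap n n' v) := ⟨hne0⟩
      rw [ZMod.val_neg_of_ne_zero, hsub2]
    rw [cyclicDist, hsub2, hsub3]
    omega
  rcases le_total v.val u.val with h | h
  · exact main u v huv hdist h
  · have := main v u huv.symm (by rwa [cyclicDist_comm] at hdist) h
    refine ⟨this.1.symm, ?_⟩
    rw [cyclicDist_comm]
    exact this.2

end aux

theorem stmt10 (k k' n n' d : ℕ) [NeZero n] [NeZero n'] (hk : 1 ≤ k) (hk' : 1 ≤ k')
    (hn : 2 * k ≤ n) (hn' : 2 * k' ≤ n') (hratio : n' * k ≤ n * k') (hd : 0 < d) :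
    alpha (strongPower (circularGraph k' n') d) ≤ alpha (strongPower (circularGraph k n) d) := by
  have hnpos : 0 < n := NeZero.pos n
  set F : (Fin d → ZMod n') → (Fin d → ZMod n) := fun x i => scaleMap n n' (x i) with hF
  -- key property
  have hkey : ∀ u v : ZMod n', u ≠ v → ¬ (circularGraph k' n').Adj u v →
      scaleMap n n' u ≠ scaleMap n n' v ∧
        ¬ (circularGraph k n).Adj (scaleMap n n' u) (scaleMap n n' v) := by
    intro u v huv hna
    have hdist : k' ≤ cyclicDist n' u v := by
      by_contra h
      exact hna ⟨huv, by omega⟩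
    obtain ⟨h1, h2⟩ := scaleMap_key hk hnpos hratio u v huv hdist
    exact ⟨h1, fun hadj => by
      have h4 : cyclicDist n (scaleMap n n' u) (scaleMap n n' v) < k := hadj.2
      omega⟩
  unfold alpha
  apply csSup_le_csSup
  · -- bounded above by Fintype.card
    refine ⟨Fintype.card (Fin d → ZMod n), ?_⟩
    rintro m ⟨s, _, rfl⟩
    exact Finset.card_le_univ s
  · exact ⟨0, ∅, by simp [IsIndep], by simp⟩
  · rintro m ⟨s, hind, rfl⟩
    -- key: for distinct elements of s, F differs in some witness coord
    have hwit : ∀ u ∈ s, ∀ v ∈ s, u ≠ v →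
        ∃ i, F u i ≠ F v i ∧ ¬ (circularGraph k n).Adj (F u i) (F v i) := by
      intro u hu v hv huv
      have hna := hind u hu v hv huv
      rw [strongPower] at hna
      simp only [not_and, not_forall] at hna
      obtain ⟨i, hi⟩ := hna huv
      push_neg at hi
      obtain ⟨hi1, hi2⟩ := hi
      exact ⟨i, hkey (u i) (v i) hi1 hi2⟩
    have hinj : Set.InjOn F ↑s := by
      intro u hu v hv hFuv
      by_contra huv
      obtain ⟨i, hi, _⟩ := hwit u hu v hv huv
      exact hi (congrFun hFuv i)
    refine ⟨s.image F, ?_, ?_⟩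
    · intro x hx y hy hxy
      simp only [Finset.coe_image, Set.mem_image, Finset.mem_coe] at hx hy
      obtain ⟨u, hu, rfl⟩ := hx
      obtain ⟨v, hv, rfl⟩ := hy
      have huv : u ≠ v := fun h => hxy (by rw [h])
      obtain ⟨i, hi1, hi2⟩ := hwit u hu v hv huv
      rintro ⟨_, hall⟩
      rcases hall i with h | h
      · exact hi1 h
      · exact hi2 h
    · exact Finset.card_image_of_injOn hinj
end

section
/- There exists an independent set of size 367 in the fifth strong product power of the 7-cycle C₇; hence α(C₇⁵) ≥ 367 and Θ(C₇) ≥ 367^{1/5}. -/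
set_option maxRecDepth 100000
set_option maxHeartbeats 8000000

-- auxiliary development

instance : DecidableRel (circularGraph 2 7).Adj :=
  fun u v => decidable_of_iff (u ≠ v ∧ cyclicDist 7 u v < 2) Iff.rfl

instance : DecidableRel (strongPower (circularGraph 2 7) 5).Adj :=
  fun x y => decidable_of_iff
    (x ≠ y ∧ ∀ i, x i = y i ∨ (circularGraph 2 7).Adj (x i) (y i)) Iff.rfl

def okc (A B : ℕ) : Bool := 2 ≤ (A + 7 - B) % 7 && (A + 7 - B) % 7 ≤ 5

def chkPair (a b : ℕ) : Bool :=
  okc (a / 7 ^ 0 % 7) (b / 7 ^ 0 % 7) || okc (a / 7 ^ 1 % 7) (b / 7 ^ 1 % 7) ||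
  okc (a / 7 ^ 2 % 7) (b / 7 ^ 2 % 7) || okc (a / 7 ^ 3 % 7) (b / 7 ^ 3 % 7) ||
  okc (a / 7 ^ 4 % 7) (b / 7 ^ 4 % 7)

def chkAll : List ℕ → Bool
  | [] => true
  | a :: l => l.all (chkPair a) && chkAll l

def w (n : ℕ) : Fin 5 → ZMod 7 := fun i => ((n / 7 ^ i.val % 7 : ℕ) : ZMod 7)

def codes : List ℕ := [27, 29, 87, 138, 189, 203, 261, 312, 384, 435, 444, 495, 609, 618, 669, 732, 741, 792, 850, 901, 915, 966, 1024, 1038, 1089, 1147, 1198, 1256, 1270, 1321, 1323, 1419, 1421, 1479, 1530, 1555, 1602, 1653, 1711, 1725, 1776, 1827, 1885, 1950, 2008, 2010, 2073, 2131, 2182, 2184, 2242, 2256, 2307, 2365, 2405, 2463, 2514, 2572, 2623, 2637, 2688, 2697, 2760, 2811, 2869, 2871, 2929, 2943, 2994, 3045, 3108, 3117, 3168, 3226, 3277, 3291, 3349, 3400, 3465, 3523, 3574, 3583, 3697, 3757, 3795, 3804, 3855, 3978, 4029, 4087, 4152, 4210, 4261, 4263, 4326, 4384, 4386, 4444, 4507,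 4509, 4567, 4618, 4683, 4741, 4792, 4839, 4890, 4948, 4950, 5013, 5071, 5122, 5124, 5187, 5196, 5247, 5305, 5370, 5428, 5479, 5493, 5544, 5602, 5653, 5711, 5725, 5776, 5785, 5848, 5899, 5950, 5959, 6010, 6073, 6082, 6133, 6180, 6231, 6289, 6307, 6340, 6365, 6405, 6463, 6514, 6535, 6586, 6637, 6646, 6697, 6760, 6762, 6820, 6883, 6943, 6994, 7052, 7066, 7117, 7168, 7215, 7266, 7324, 7382, 7384, 7447, 7449, 7507, 7570, 7621, 7623, 7681, 7746, 7804, 7855, 7927, 7978, 8029, 8038, 8101, 8152, 8210, 8212, 8275, 8284, 8335, 8386, 8458, 8509, 8567, 8664, 8788, 8792, 8839, 8890, 8899, 8962, 8971, 9022, 9073, 9145, 9196, 9247, 9261, 9319, 9377, 9428, 9493, 9551, 9602, 9648, 9699, 9708, 9759, 9822, 9882, 9933, 9947, 10005, 10056, 10114, 10179, 10230, 10288, 10302, 10353, 10411, 10462, 10471, 10534, 10537, 10658, 10710, 10768, 10819, 10885, 10943, 10989, 11040, 11098, 11126, 11149, 11214, 11223, 11274, 11337, 11395, 11397, 11455,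 11506, 11520, 11571, 11629, 11694, 11752, 11803, 11812, 11875, 11926, 11977, 11986, 12024, 12075, 12133, 12135, 12193, 12207, 12258, 12316, 12379, 12381, 12432, 12490, 12541, 12555, 12613, 12664, 12736, 12787, 12789, 12847, 12910, 12961, 12970, 13021, 13035, 13093, 13144, 13195, 13242, 13267, 13318, 13376, 13416, 13474, 13476, 13597, 13648, 13650, 13708, 13722, 13773, 13831, 13882, 13896, 13954, 14005, 14056, 14070, 14128, 14179, 14237, 14302, 14311, 14362, 14409, 14460, 14511, 14569, 14634, 14692, 14743, 14757, 14815, 14866, 14917, 14989, 15040, 15049, 15112, 15163, 15221, 15223, 15274, 15288, 15346, 15397, 15460, 15469, 15520, 15578, 15629, 15694, 15752, 15792, 15850, 15901, 15910, 15975, 16033, 16084, 16147, 16149, 16207, 16258, 16316, 16330, 16381, 16439, 16504, 16555, 16564, 16615, 16678, 16736, 16738, 16796]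

lemma big : chkAll codes = true := by decide

lemma chkAll_pairwise : ∀ l : List ℕ, chkAll l = true →
    l.Pairwise (fun a b => chkPair a b = true) := by
  intro l
  induction l with
  | nil => intro _; exact List.Pairwise.nil
  | cons a l ih =>
    intro h
    rw [chkAll, Bool.and_eq_true, List.all_eq_true] at h
    exact List.Pairwise.cons (fun b hb => h.1 b hb) (ih h.2)

lemma coordKey : ∀ A < 7, ∀ B < 7, okc A B = true →
    ¬((A : ZMod 7) = (B : ZMod 7) ∨ (circularGraph 2 7).Adj (A : ZMod 7) (B : ZMod 7)) := by
  decide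

lemma digit_lt (a k : ℕ) : a / 7 ^ k % 7 < 7 := Nat.mod_lt _ (by norm_num)

lemma pairKey {a b : ℕ} (h : chkPair a b = true) :
    w a ≠ w b ∧ ¬ (strongPower (circularGraph 2 7) 5).Adj (w a) (w b) := by
  rw [chkPair, Bool.or_eq_true, Bool.or_eq_true, Bool.or_eq_true, Bool.or_eq_true] at h
  have key : ∃ i : Fin 5, okc (a / 7 ^ i.val % 7) (b / 7 ^ i.val % 7) = true := by
    rcases h with ((((h | h) | h) | h) | h)
    · exact ⟨⟨0, by norm_num⟩, h⟩
    · exact ⟨⟨1, by norm_num⟩, h⟩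
    · exact ⟨⟨2, by norm_num⟩, h⟩
    · exact ⟨⟨3, by norm_num⟩, h⟩
    · exact ⟨⟨4, by norm_num⟩, h⟩
  obtain ⟨i, hi⟩ := key
  have hcoord := coordKey _ (digit_lt a i.val) _ (digit_lt b i.val) hi
  constructor
  · intro heq
    exact hcoord (Or.inl (congrFun heq i))
  · rintro ⟨_, hall⟩
    exact hcoord (hall i)

def L : List (Fin 5 → ZMod 7) := codes.map w

lemma Lpair : L.Pairwise
    (fun u v => u ≠ v ∧ ¬ (strongPower (circularGraph 2 7) 5).Adj u v) :=
  List.Pairwise.map w (fun _ _ h => pairKey h) (chkAll_pairwise codes big)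

lemma Lnodup : L.Nodup := Lpair.imp (fun h => h.1)

def S : Finset (Fin 5 → ZMod 7) := ⟨(L : Multiset _), Multiset.coe_nodup.mpr Lnodup⟩

lemma Scard : S.card = 367 := rfl

lemma Sindep : IsIndep (strongPower (circularGraph 2 7) 5) ↑S := by
  have hsymm : Symmetric (fun u v => u ≠ v ∧
      ¬ (strongPower (circularGraph 2 7) 5).Adj u v) := by
    intro u v ⟨h1, h2⟩
    exact ⟨h1.symm, fun hadj => h2 ((strongPower (circularGraph 2 7) 5).adj_symm hadj)⟩
  intro u hu v hv hne
  have hu' : u ∈ L := hu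
  have hv' : v ∈ L := hv
  haveI : Std.Symm (fun u v : Fin 5 → ZMod 7 => u ≠ v ∧
      ¬ (strongPower (circularGraph 2 7) 5).Adj u v) := ⟨fun _ _ h => hsymm h⟩
  exact (List.Pairwise.forall Lpair hu' hv' hne).2

lemma alpha_le_card {V : Type*} [Fintype V] [DecidableEq V] (G : SimpleGraph V) :
    alpha G ≤ Fintype.card V := by
  apply csSup_le
  · exact ⟨0, ⟨∅, by intro u hu; simp at hu, rfl⟩⟩
  · rintro m ⟨s, _, rfl⟩
    exact Finset.card_le_univ s

lemma bddAbove_alphaSet {V : Type*} [Fintype V] (G : SimpleGraph V) :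
    BddAbove {m | ∃ s : Finset V, IsIndep G ↑s ∧ s.card = m} := by
  refine ⟨Fintype.card V, ?_⟩
  rintro m ⟨s, _, rfl⟩
  exact Finset.card_le_univ s

lemma le_alpha {V : Type*} [Fintype V] (G : SimpleGraph V) (s : Finset V)
    (h : IsIndep G ↑s) : s.card ≤ alpha G :=
  le_csSup (bddAbove_alphaSet G) ⟨s, h, rfl⟩

lemma alpha_strongPower_le (d : ℕ+) :
    alpha (strongPower (circularGraph 2 7) d) ≤ 7 ^ (d : ℕ) := by
  have := alpha_le_card (strongPower (circularGraph 2 7) d)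
  exact this.trans (by rw [Fintype.card_eq_nat_card]; simp [Nat.card_fun, Nat.card_zmod])

lemma capacity_ge :
    (367 : ℝ) ^ ((1 : ℝ) / 5) ≤ shannonCapacity (circularGraph 2 7) := by
  have hcard : S.card = 367 := Scard
  have halpha : (367 : ℕ) ≤ alpha (strongPower (circularGraph 2 7) 5) := by
    calc (367 : ℕ) = S.card := hcard.symm
    _ ≤ _ := le_alpha _ S Sindep
  -- bounded above
  have hbdd : BddAbove (Set.range fun d : ℕ+ =>
      (alpha (strongPower (circularGraph 2 7) d) : ℝ) ^ ((1 : ℝ) / (d : ℝ))) := by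
    refine ⟨7, ?_⟩
    rintro x ⟨d, rfl⟩
    have h1 : (alpha (strongPower (circularGraph 2 7) d) : ℝ) ≤ (7 : ℝ) ^ (d : ℕ) := by
      exact_mod_cast Nat.cast_le.mpr (alpha_strongPower_le d)
    have hd : (0 : ℝ) < (d : ℝ) := by exact_mod_cast d.pos
    have h2 : (alpha (strongPower (circularGraph 2 7) d) : ℝ) ^ ((1 : ℝ) / (d : ℝ)) ≤
        ((7 : ℝ) ^ (d : ℕ)) ^ ((1 : ℝ) / (d : ℝ)) := by
      apply Real.rpow_le_rpow (by positivity) h1 (by positivity)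
    calc _ ≤ ((7 : ℝ) ^ (d : ℕ)) ^ ((1 : ℝ) / (d : ℝ)) := h2
    _ = (7 : ℝ) ^ ((d : ℝ) * ((1 : ℝ) / (d : ℝ))) := by
        rw [← Real.rpow_natCast (7 : ℝ) (d : ℕ), ← Real.rpow_mul (by norm_num)]
    _ = 7 := by
        rw [mul_one_div, div_self (ne_of_gt hd), Real.rpow_one]
  have h5 : (367 : ℝ) ^ ((1 : ℝ) / 5) ≤
      (alpha (strongPower (circularGraph 2 7) (5 : ℕ+)) : ℝ) ^ ((1 : ℝ) / ((5 : ℕ+) : ℝ)) := by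
    have : ((5 : ℕ+) : ℝ) = (5 : ℝ) := by norm_num
    rw [this]
    apply Real.rpow_le_rpow (by norm_num) (by exact_mod_cast halpha) (by norm_num)
  exact le_trans h5 (le_ciSup hbdd (5 : ℕ+))

lemma alpha367 : 367 ≤ alpha (strongPower (circularGraph 2 7) 5) := by
  calc (367 : ℕ) = S.card := Scard.symm
  _ ≤ _ := le_alpha _ S Sindep

theorem stmt14 :
    (∃ S : Finset (Fin 5 → ZMod 7),
      S.card = 367 ∧ IsIndep (strongPower (circularGraph 2 7) 5) ↑S) ∧
    367 ≤ alpha (strongPower (circularGraph 2 7) 5) ∧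
    (367 : ℝ) ^ ((1 : ℝ) / 5) ≤ shannonCapacity (circularGraph 2 7) := by
  exact ⟨⟨S, Scard, Sindep⟩, alpha367, capacity_ge⟩
end
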